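/- Let ν be a probability measure on (0,∞) and d ≥ 1. If ∫_{(0,∞)} ν([r,∞))^{1/d} dr < ∞ then ∫_{(0,∞)} r^d ν(dr) < ∞. -/

import Mathlib

open MeasureTheory Set

/-- The greedy-paths integrability condition implies the `d`-th moment condition:
if `∫ ν([r,∞))^{1/d} dr < ∞` then `∫ r^d ν(dr) < ∞`. -/
theorem moment_of_greedy_condition (d : ℕ) (hd : 1 ≤ d)
    (ν : Measure ℝ) [IsProbabilityMeasure ν] (hsupp : ν (Iic 0) = 0)
    (h : ∫⁻ r in Ioi (0 : ℝ), (ν (Ici r)) ^ (1 / (d : ℝ)) < ⊤) :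
    ∫⁻ r, ENNReal.ofReal (r ^ d) ∂ν < ⊤ := by
  set p : ℝ := (d : ℝ) with hp
  have hp1 : (1 : ℝ) ≤ p := by simp [hp]; exact_mod_cast hd
  have p_pos : 0 < p := lt_of_lt_of_le one_pos hp1
  set F : ℝ → ENNReal := fun t => ν (Ici t) with hF
  set C : ENNReal := ∫⁻ r in Ioi (0 : ℝ), (F r) ^ (1 / p) with hC
  have hC_lt : C < ⊤ := h
  have F_anti : Antitone F := fun s t hst => measure_mono (Ici_subset_Ici.mpr hst)
  have F_mble : Measurable F := F_anti.measurable
  have Fp_mble : Measurable fun t => (F t) ^ (1 / p) :=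
    F_mble.pow_const _
  -- key pointwise bound: t * F(t)^(1/p) ≤ C for t > 0
  have key : ∀ t : ℝ, 0 < t → ENNReal.ofReal t * (F t) ^ (1 / p) ≤ C := by
    intro t ht
    have h1 : ENNReal.ofReal t * (F t) ^ (1 / p)
        = ∫⁻ _ in Ioc (0 : ℝ) t, (F t) ^ (1 / p) := by
      rw [setLIntegral_const, Real.volume_Ioc, sub_zero, mul_comm]
    rw [h1]
    calc ∫⁻ _ in Ioc (0 : ℝ) t, (F t) ^ (1 / p)
        ≤ ∫⁻ u in Ioc (0 : ℝ) t, (F u) ^ (1 / p) := by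
          refine setLIntegral_mono Fp_mble fun u hu => ?_
          exact ENNReal.rpow_le_rpow (F_anti hu.2) (by positivity)
      _ ≤ ∫⁻ u in Ioi (0 : ℝ), (F u) ^ (1 / p) :=
          lintegral_mono_set Ioc_subset_Ioi_self
  -- a.e. nonnegativity
  have ae_nn : 0 ≤ᵐ[ν] (id : ℝ → ℝ) := by
    have : ν {x : ℝ | ¬ 0 ≤ x} = 0 := by
      refine measure_mono_null (fun x hx => ?_) hsupp
      simp only [mem_setOf_eq, not_le] at hx
      exact le_of_lt hx
    exact (ae_iff).mpr this
  -- rewrite natural power as rpow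
  have hrw : ∫⁻ r, ENNReal.ofReal (r ^ d) ∂ν
      = ∫⁻ r, ENNReal.ofReal (r ^ p) ∂ν := by
    simp [hp, Real.rpow_natCast]
  have lc := lintegral_rpow_eq_lintegral_meas_le_mul ν ae_nn aemeasurable_id p_pos
  simp only [id_eq] at lc
  rw [hrw, lc]
  have hsets : ∀ t : ℝ, {a : ℝ | t ≤ a} = Ici t := fun t => rfl
  -- bound the inner integral
  have inner_le : ∀ t ∈ Ioi (0 : ℝ),
      ν {a : ℝ | t ≤ a} * ENNReal.ofReal (t ^ (p - 1))
        ≤ C ^ (p - 1) * (F t) ^ (1 / p) := by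
    intro t ht
    rw [hsets t]
    have htpos : (0 : ℝ) < t := ht
    by_cases hF0 : F t = 0
    · simp [hF, hF0] at *
      simp [hF0]
    have hFtop : F t ≠ ⊤ := (measure_lt_top ν _).ne
    have step1 : (ENNReal.ofReal t * (F t) ^ (1 / p)) ^ (p - 1) ≤ C ^ (p - 1) :=
      ENNReal.rpow_le_rpow (key t htpos) (by linarith)
    have expand : (ENNReal.ofReal t * (F t) ^ (1 / p)) ^ (p - 1)
        = ENNReal.ofReal (t ^ (p - 1)) * (F t) ^ ((p - 1) / p) := by
      rw [ENNReal.mul_rpow_of_ne_top (by simp) (by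
        exact ENNReal.rpow_ne_top_of_nonneg (by positivity) hFtop)]
      rw [← ENNReal.rpow_mul, ← ENNReal.ofReal_rpow_of_pos htpos]
      ring_nf
    have hsplit : F t = (F t) ^ (1 / p) * (F t) ^ ((p - 1) / p) := by
      rw [← ENNReal.rpow_add _ _ hF0 hFtop]
      have : 1 / p + (p - 1) / p = 1 := by field_simp; ring
      rw [this, ENNReal.rpow_one]
    calc F t * ENNReal.ofReal (t ^ (p - 1))
        = (F t) ^ (1 / p) * ((F t) ^ ((p - 1) / p) * ENNReal.ofReal (t ^ (p - 1))) := by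
          nth_rewrite 1 [hsplit]; ring
      _ = (ENNReal.ofReal t * (F t) ^ (1 / p)) ^ (p - 1) * (F t) ^ (1 / p) := by
          rw [expand]; ring
      _ ≤ C ^ (p - 1) * (F t) ^ (1 / p) :=
          mul_le_mul_left step1 _
  have int_le : ∫⁻ t in Ioi (0 : ℝ), ν {a : ℝ | t ≤ a} * ENNReal.ofReal (t ^ (p - 1))
      ≤ C ^ (p - 1) * C := by
    calc ∫⁻ t in Ioi (0 : ℝ), ν {a : ℝ | t ≤ a} * ENNReal.ofReal (t ^ (p - 1))
        ≤ ∫⁻ t in Ioi (0 : ℝ), C ^ (p - 1) * (F t) ^ (1 / p) := by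
          refine setLIntegral_mono (by exact Fp_mble.const_mul _) inner_le
      _ = C ^ (p - 1) * C := by rw [lintegral_const_mul _ Fp_mble, hC]
  have hCpow : C ^ (p - 1) * C < ⊤ :=
    ENNReal.mul_lt_top (ENNReal.rpow_lt_top_of_nonneg (by linarith) hC_lt.ne) hC_lt
  calc ENNReal.ofReal p * ∫⁻ t in Ioi (0 : ℝ),
        ν {a : ℝ | t ≤ a} * ENNReal.ofReal (t ^ (p - 1))
      ≤ ENNReal.ofReal p * (C ^ (p - 1) * C) := mul_le_mul_right int_le _
    _ < ⊤ := ENNReal.mul_lt_top ENNReal.ofReal_lt_top hCpow
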